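/- Let G' be a graph on a vertex set of integers such that no pair of vertices is 'bad', i.e., no two vertices are joined by two edge-disjoint monotone paths. Define a relation on V(G') by a <_P b iff a < b (as integers) and there is a monotone path in G' from a to b. Then <_P is a strict partial order, its cover graph equals G', and the resulting poset is uniquely generated. -/

import Mathlib

/-- A monotone path from `a` to `b` in a graph on integer vertices: a list of
vertices starting at `a`, ending at `b`, strictly increasing, with consecutive
vertices adjacent. -/
def IsMonotonePath (G : SimpleGraph ℤ) (a b : ℤ) (l : List ℤ) : Prop :=
  l.head? = some a ∧ l.getLast? = some b ∧
    l.Chain' fun x y => x < y ∧ G.Adj x y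

/-- The list of edges of a path given by a list of vertices. -/
def pathEdges (l : List ℤ) : List (Sym2 ℤ) :=
  (l.zip l.tail).map fun p => s(p.1, p.2)

/-- A pair `{a, b}` is bad if there exist two edge-disjoint monotone paths both
having endpoints `a` and `b`. -/
def BadPair (G : SimpleGraph ℤ) (a b : ℤ) : Prop :=
  a ≠ b ∧ ∃ l₁ l₂ : List ℤ, IsMonotonePath G a b l₁ ∧ IsMonotonePath G a b l₂ ∧
    (pathEdges l₁).Disjoint (pathEdges l₂)

lemma mp_pairwise {G : SimpleGraph ℤ} {a b l} (h : IsMonotonePath G a b l) :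
    l.Pairwise (· < ·) :=
  List.isChain_iff_pairwise.mp (h.2.2.imp fun _ _ hq => hq.1)

lemma zip_tail_chain' {S : ℤ → ℤ → Prop} :
    ∀ {l : List ℤ}, l.Chain' S → ∀ p ∈ l.zip l.tail, S p.1 p.2
  | [], _, p, hp => by simp [List.zip] at hp
  | [a], _, p, hp => by simp [List.zip] at hp
  | a :: b :: t, h, p, hp => by
      unfold List.Chain' at h
      rw [List.isChain_cons_cons] at h
      simp only [List.tail_cons, List.zip_cons_cons, List.mem_cons] at hp
      rcases hp with rfl | hp
      · exact h.1
      · exact zip_tail_chain' h.2 p hp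

lemma mem_pathEdges {l : List ℤ} {e : Sym2 ℤ} (hc : l.Chain' (· < ·))
    (he : e ∈ pathEdges l) :
    ∃ u v, u < v ∧ e = s(u, v) ∧ (u, v) ∈ l.zip l.tail := by
  simp only [pathEdges, List.mem_map] at he
  obtain ⟨p, hp, hep⟩ := he
  exact ⟨p.1, p.2, zip_tail_chain' hc p hp, hep.symm, hp⟩

lemma of_mem_zip_tail {l : List ℤ} {u v : ℤ} (h : (u, v) ∈ l.zip l.tail) :
    u ∈ l ∧ v ∈ l :=
  ⟨(List.of_mem_zip h).1, List.mem_of_mem_tail (List.of_mem_zip h).2⟩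


lemma mem_of_getLast?_eq {l : List ℤ} {b : ℤ} (h : l.getLast? = some b) : b ∈ l := by
  obtain ⟨hne, hb⟩ := List.mem_getLast?_eq_getLast (show b ∈ l.getLast? from h)
  rw [hb]; exact List.getLast_mem hne

lemma pairwise_lt_getLast : ∀ {l : List ℤ} {c : ℤ}, l.Pairwise (· < ·) →
    l.getLast? = some c → ∀ x ∈ l, x ≤ c
  | [], _, _, hl, _, hx => by simp at hl
  | [d], c, hp, hl, x, hx => by
      simp at hl hx; omega
  | d :: e :: t, c, hp, hl, x, hx => by
      rw [List.getLast?_cons_cons] at hl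
      rcases List.mem_cons.mp hx with rfl | hx
      · have hc : c ∈ e :: t := mem_of_getLast?_eq hl
        have := (List.pairwise_cons.mp hp).1 c hc
        omega
      · exact pairwise_lt_getLast (List.pairwise_cons.mp hp).2 hl x hx

lemma pairwise_head_lt {a : ℤ} {t : List ℤ} (hp : (a :: t).Pairwise (· < ·)) :
    ∀ x ∈ t, a < x := (List.pairwise_cons.mp hp).1

lemma firstEdge {a v : ℤ} {t : List ℤ} (hp : (a :: t).Pairwise (· < ·))
    (he : s(a, v) ∈ pathEdges (a :: t)) : t.head? = some v := by
  cases t with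
  | nil => simp [pathEdges, List.zip] at he
  | cons b t' =>
    have hedges : pathEdges (a :: b :: t') = s(a, b) :: pathEdges (b :: t') := rfl
    rw [hedges, List.mem_cons] at he
    have hab : a < b := pairwise_head_lt hp b (by simp)
    rcases he with he | he
    · rw [Sym2.eq_iff] at he
      rcases he with ⟨-, rfl⟩ | ⟨h1, h2⟩
      · simp
      · omega
    · exfalso
      obtain ⟨u', v', _, hev, hz⟩ := mem_pathEdges
        (List.isChain_iff_pairwise.mpr (List.pairwise_cons.mp hp).2) he
      have hm := of_mem_zip_tail hz
      have ha : a ∈ (b :: t') := by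
        have : a ∈ s(u', v') := by rw [← hev]; simp
        rcases Sym2.mem_iff.mp this with rfl | rfl
        · exact hm.1
        · exact hm.2
      have := pairwise_head_lt hp a ha
      omega

lemma mp_ne_nil {G : SimpleGraph ℤ} {a b l} (h : IsMonotonePath G a b l) : l ≠ [] := by
  intro hl; subst hl; simp [IsMonotonePath] at h

lemma mp_singleton {G : SimpleGraph ℤ} {a b : ℤ} (h : IsMonotonePath G a b [a]) : a = b := by
  simpa [IsMonotonePath] using h.2.1

lemma mp_cons {G : SimpleGraph ℤ} {a b l} (h : IsMonotonePath G a b l) :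
    ∃ t, l = a :: t := by
  cases l with
  | nil => simp [IsMonotonePath] at h
  | cons x t => obtain ⟨h1, -⟩ := h; simp at h1; exact ⟨t, by rw [h1]⟩

lemma mp_self {G : SimpleGraph ℤ} {a l} (h : IsMonotonePath G a a l) : l = [a] := by
  obtain ⟨t, rfl⟩ := mp_cons h
  cases t with
  | nil => rfl
  | cons x t' =>
    exfalso
    have hp := mp_pairwise h
    have hl : (x :: t').getLast? = some a := by
      rw [← h.2.1]; rfl
    have := pairwise_head_lt hp a (mem_of_getLast?_eq hl)
    omega

lemma mp_lt {G : SimpleGraph ℤ} {a b l} (h : IsMonotonePath G a b l) (hne : a ≠ b) :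
    a < b := by
  obtain ⟨t, rfl⟩ := mp_cons h
  cases t with
  | nil => exact absurd (mp_singleton h) hne
  | cons x t' =>
    have hp := mp_pairwise h
    have := pairwise_lt_getLast hp h.2.1
    have hb : b ∈ a :: x :: t' := mem_of_getLast?_eq h.2.1
    rcases List.mem_cons.mp hb with rfl | hb
    · omega
    · exact pairwise_head_lt hp b hb

lemma mp_append {G : SimpleGraph ℤ} {a b c : ℤ} {l₁ l₂ : List ℤ}
    (h₁ : IsMonotonePath G a b l₁) (h₂ : IsMonotonePath G b c l₂) :
    IsMonotonePath G a c (l₁ ++ l₂.tail) := by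
  obtain ⟨t, rfl⟩ := mp_cons h₂
  cases t with
  | nil =>
    have : b = c := mp_singleton h₂
    subst this
    simpa using h₁
  | cons e t' =>
    obtain ⟨hh1, hl1, hc1⟩ := h₁
    obtain ⟨hh2, hl2, hc2⟩ := h₂
    refine ⟨?_, ?_, ?_⟩
    · rw [List.head?_append_of_ne_nil _ (mp_ne_nil ⟨hh1, hl1, hc1⟩)]
      · exact hh1
    · rw [List.tail_cons, List.getLast?_append_of_ne_nil _ (by simp)]
      rw [← hl2]; rfl
    · rw [List.tail_cons]; unfold List.Chain'; rw [List.isChain_append]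
      refine ⟨hc1, (List.isChain_cons_cons.mp hc2).2, ?_⟩
      intro x hx y hy
      rw [hl1] at hx
      simp at hx hy
      subst hx; subst hy
      exact (List.isChain_cons_cons.mp hc2).1

lemma mp_split {G : SimpleGraph ℤ} {a b x : ℤ} {t : List ℤ}
    (h : IsMonotonePath G a b (a :: x :: t)) :
    IsMonotonePath G a x [a, x] ∧ IsMonotonePath G x b (x :: t) := by
  obtain ⟨hh, hl, hc⟩ := h
  unfold List.Chain' at hc
  rw [List.isChain_cons_cons] at hc
  exact ⟨⟨rfl, rfl, List.isChain_pair.mpr hc.1⟩,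
    ⟨rfl, by rw [← hl]; rfl, hc.2⟩⟩

lemma prefix_path {G : SimpleGraph ℤ} {a b m : ℤ} {t : List ℤ}
    (h : IsMonotonePath G a b (a :: t)) (hm : m ∈ t) :
    ∃ u w, t = u ++ m :: w ∧ (∀ v ∈ u, v < m) ∧
      IsMonotonePath G a m (a :: (u ++ [m])) := by
  set p : ℤ → Bool := fun v => decide (v ≠ m) with hp
  have hd : t.dropWhile p ≠ [] := by
    intro hnil
    have := List.dropWhile_eq_nil_iff.mp hnil m hm
    simp [hp] at this
  have hhead : (t.dropWhile p).head hd = m := by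
    have := List.head_dropWhile_not p hd
    simpa [hp] using this
  refine ⟨t.takeWhile p, (t.dropWhile p).tail, ?_, ?_, ?_⟩
  · rw [← hhead, List.cons_head_tail, List.takeWhile_append_dropWhile]
  case' refine_2 | refine_3 =>
    have ht : t = t.takeWhile p ++ m :: (t.dropWhile p).tail := by
      rw [← hhead, List.cons_head_tail, List.takeWhile_append_dropWhile]
  · -- elements of takeWhile are < m
    intro v hv
    have hpw : t.Pairwise (· < ·) := (List.pairwise_cons.mp (mp_pairwise h)).2
    rw [ht] at hpw
    exact (List.pairwise_append.mp hpw).2.2 v hv m (by simp)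
  · refine ⟨rfl, ?_, ?_⟩
    · rw [show a :: (t.takeWhile p ++ [m]) = (a :: t.takeWhile p) ++ [m] by simp,
        List.getLast?_concat]
    · have hpre : (a :: (t.takeWhile p ++ [m])) <+: (a :: t) := by
        refine ⟨(t.dropWhile p).tail, ?_⟩
        rw [List.cons_append, List.append_assoc]
        simp [← ht]
      exact h.2.2.prefix hpre

lemma second_eq {G : SimpleGraph ℤ} (hbad : ∀ a b : ℤ, ¬ BadPair G a b)
    {a b x y : ℤ} {t₁ t₂ : List ℤ}
    (h₁ : IsMonotonePath G a b (a :: x :: t₁))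
    (h₂ : IsMonotonePath G a b (a :: y :: t₂)) : x = y := by
  by_contra hxy
  have hb₁ : b ∈ x :: t₁ := mem_of_getLast?_eq (by rw [← h₁.2.1]; rfl)
  have hb₂ : b ∈ y :: t₂ := mem_of_getLast?_eq (by rw [← h₂.2.1]; rfl)
  set f : List ℤ := (x :: t₁).filter (fun v => decide (v ∈ y :: t₂)) with hfdef
  have hf : f ≠ [] := by
    have : b ∈ f := List.mem_filter.mpr ⟨hb₁, by simp [hb₂]⟩
    intro hnil; rw [hnil] at this; simp at this
  set m := f.head hf with hmdef
  have hmf : m ∈ f := List.head_mem hf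
  have hm₁ : m ∈ x :: t₁ := (List.mem_filter.mp hmf).1
  have hm₂ : m ∈ y :: t₂ := by have := (List.mem_filter.mp hmf).2; simpa using this
  have hfpw : f.Pairwise (· < ·) :=
    (List.pairwise_cons.mp (mp_pairwise h₁)).2.sublist List.filter_sublist
  have hmin : ∀ c, c ∈ x :: t₁ → c ∈ y :: t₂ → m ≤ c := by
    intro c hc₁ hc₂
    have hcf : c ∈ f := List.mem_filter.mpr ⟨hc₁, by simp [hc₂]⟩
    rw [← List.cons_head_tail hf, ← hmdef] at hcf hfpw
    rcases List.mem_cons.mp hcf with rfl | hcf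
    · exact le_refl _
    · exact le_of_lt ((List.pairwise_cons.mp hfpw).1 c hcf)
  have ham : a < m := pairwise_head_lt (mp_pairwise h₁) m hm₁
  obtain ⟨u₁, w₁, ht₁, hu₁, hq₁⟩ := prefix_path h₁ hm₁
  obtain ⟨u₂, w₂, ht₂, hu₂, hq₂⟩ := prefix_path h₂ hm₂
  -- common vertices of the two prefix paths are only a and m
  have hcom : ∀ v, v ∈ a :: (u₁ ++ [m]) → v ∈ a :: (u₂ ++ [m]) → v = a ∨ v = m := by
    intro v hv₁ hv₂
    simp only [List.mem_cons, List.mem_append, List.mem_singleton,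
      List.not_mem_nil, or_false] at hv₁ hv₂
    rcases hv₁ with rfl | hv₁ | rfl
    · exact Or.inl rfl
    · rcases hv₂ with rfl | hv₂ | rfl
      · exfalso
        have : v ∈ x :: t₁ := by rw [ht₁]; exact List.mem_append_left _ hv₁
        exact absurd (pairwise_head_lt (mp_pairwise h₁) v this) (lt_irrefl v)
      · exfalso
        have hv1' : v ∈ x :: t₁ := by rw [ht₁]; exact List.mem_append_left _ hv₁
        have hv2' : v ∈ y :: t₂ := by rw [ht₂]; exact List.mem_append_left _ hv₂
        exact absurd (hmin v hv1' hv2') (not_le.mpr (hu₁ v hv₁))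
      · exact Or.inr rfl
    · exact Or.inr rfl
  -- edge-disjointness
  have hdisj : (pathEdges (a :: (u₁ ++ [m]))).Disjoint (pathEdges (a :: (u₂ ++ [m]))) := by
    intro e he₁ he₂
    have hc₁ : (a :: (u₁ ++ [m])).Chain' (· < ·) := hq₁.2.2.imp fun _ _ hq => hq.1
    have hc₂ : (a :: (u₂ ++ [m])).Chain' (· < ·) := hq₂.2.2.imp fun _ _ hq => hq.1
    obtain ⟨u, v, huv, rfl, hz₁⟩ := mem_pathEdges hc₁ he₁
    obtain ⟨u', v', hu'v', hev, hz₂⟩ := mem_pathEdges hc₂ he₂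
    obtain ⟨rfl, rfl⟩ : u = u' ∧ v = v' := by
      rw [Sym2.eq_iff] at hev
      rcases hev with ⟨rfl, rfl⟩ | ⟨rfl, rfl⟩
      · exact ⟨rfl, rfl⟩
      · omega
    have hmu := of_mem_zip_tail hz₁
    have hmv := of_mem_zip_tail hz₂
    have hua := hcom u hmu.1 hmv.1
    have hva := hcom v hmu.2 hmv.2
    obtain ⟨rfl, rfl⟩ : u = a ∧ v = m := by rcases hua with rfl | rfl <;> rcases hva with h | h <;> omega
    -- so s(a, m) is an edge of both prefix paths; hence both u₁, u₂ are empty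
    have hx : x = m := by
      have hh := firstEdge (mp_pairwise hq₁) he₁
      cases u₁ with
      | nil => simp only [List.nil_append, List.cons.injEq] at ht₁; exact ht₁.1
      | cons c u₁' =>
        exfalso
        have : c = m := by simpa using hh
        exact absurd (hu₁ c (by simp)) (by omega)
    have hy : y = m := by
      have hh := firstEdge (mp_pairwise hq₂) he₂
      cases u₂ with
      | nil => simp only [List.nil_append, List.cons.injEq] at ht₂; exact ht₂.1
      | cons c u₂' =>
        exfalso
        have : c = m := by simpa using hh
        exact absurd (hu₂ c (by simp)) (by omega)
    exact hxy (hx.trans hy.symm)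
  exact hbad a m ⟨ne_of_lt ham, _, _, hq₁, hq₂, hdisj⟩

lemma mp_unique {G : SimpleGraph ℤ} (hbad : ∀ a b : ℤ, ¬ BadPair G a b) :
    ∀ n {a b : ℤ} {l₁ l₂ : List ℤ}, l₁.length + l₂.length ≤ n →
      IsMonotonePath G a b l₁ → IsMonotonePath G a b l₂ → l₁ = l₂ := by
  intro n
  induction n with
  | zero =>
    intro a b l₁ l₂ hn h₁ h₂
    have := mp_ne_nil h₁
    cases l₁ <;> simp_all
  | succ n ih =>
    intro a b l₁ l₂ hn h₁ h₂
    obtain ⟨t₁, rfl⟩ := mp_cons h₁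
    obtain ⟨t₂, rfl⟩ := mp_cons h₂
    by_cases hab : a = b
    · subst hab; rw [mp_self h₁, mp_self h₂]
    · cases t₁ with
      | nil => exact absurd (mp_singleton h₁) hab
      | cons x t₁' =>
        cases t₂ with
        | nil => exact absurd (mp_singleton h₂) hab
        | cons y t₂' =>
          have hxy : x = y := second_eq hbad h₁ h₂
          subst hxy
          have := ih (l₁ := x :: t₁') (l₂ := x :: t₂')
            (by simp only [List.length_cons] at hn ⊢; omega)
            (mp_split h₁).2 (mp_split h₂).2
          rw [this]

lemma getLast?_cons_of_ne_nil {a : ℤ} {l : List ℤ} (h : l ≠ []) :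
    (a :: l).getLast? = l.getLast? := by
  cases l with
  | nil => exact absurd rfl h
  | cons b t => exact List.getLast?_cons_cons ..


/-- If a graph `G` on integer vertices has no bad pair, then the relation
`a <_P b ↔ a < b and there is a monotone path from a to b` is a strict partial
order (irreflexive and transitive), its cover graph equals `G`, and the
resulting poset is uniquely generated. -/
theorem stmt11 (G : SimpleGraph ℤ) (hbad : ∀ a b : ℤ, ¬ BadPair G a b)
    (r : ℤ → ℤ → Prop) (hr : ∀ a b, r a b ↔ a < b ∧ ∃ l, IsMonotonePath G a b l)
    (cov : ℤ → ℤ → Prop) (hcov : ∀ a b, cov a b ↔ r a b ∧ ¬ ∃ c, r a c ∧ r c b) :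
    (∀ a, ¬ r a a) ∧ Transitive r ∧
    (∀ a b, G.Adj a b ↔ (cov a b ∨ cov b a)) ∧
    (∀ a b, r a b → ∃! l : List ℤ, List.Chain cov a l ∧ l.getLast? = some b) := by
  -- a covering relation yields an edge
  have hcov_adj : ∀ x y, cov x y → x < y ∧ G.Adj x y := by
    intro x y hc
    obtain ⟨hrxy, hnoc⟩ := (hcov x y).mp hc
    obtain ⟨hlt, l, hl⟩ := (hr x y).mp hrxy
    obtain ⟨t, rfl⟩ := mp_cons hl
    cases t with
    | nil => exact absurd (mp_singleton hl) (ne_of_lt hlt)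
    | cons z t' =>
      obtain ⟨hxz, hzy⟩ := mp_split hl
      cases t' with
      | nil =>
        have : z = y := mp_singleton hzy
        subst this
        exact ⟨hlt, ((List.isChain_pair.mp hxz.2.2)).2⟩
      | cons w t'' =>
        exfalso
        apply hnoc
        refine ⟨z, (hr x z).mpr ⟨?_, [x, z], hxz⟩, (hr z y).mpr ⟨?_, z :: w :: t'', hzy⟩⟩
        · exact (List.isChain_pair.mp hxz.2.2).1
        · refine mp_lt hzy fun hzyeq => ?_
          subst hzyeq
          simpa using mp_self hzy
  -- an edge going up is a covering relation
  have key : ∀ a b, G.Adj a b → a < b → cov a b := by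
    intro a b hadj hlt
    have hpab : IsMonotonePath G a b [a, b] := ⟨rfl, rfl, List.isChain_pair.mpr ⟨hlt, hadj⟩⟩
    rw [hcov]
    refine ⟨(hr a b).mpr ⟨hlt, _, hpab⟩, ?_⟩
    rintro ⟨c, hac, hcb⟩
    obtain ⟨hac', l₁, hl₁⟩ := (hr a c).mp hac
    obtain ⟨hcb', l₂, hl₂⟩ := (hr c b).mp hcb
    have hl := mp_append hl₁ hl₂
    apply hbad a b
    refine ⟨ne_of_lt hlt, [a, b], l₁ ++ l₂.tail, hpab, hl, ?_⟩
    intro e he₁ he₂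
    have he : e = s(a, b) := by
      simpa [pathEdges, List.zip] using he₁
    subst he
    obtain ⟨t, ht⟩ := mp_cons hl
    rw [ht] at he₂
    have hh := firstEdge (by rw [← ht]; exact mp_pairwise hl) he₂
    obtain ⟨t₁, rfl⟩ := mp_cons hl₁
    cases t₁ with
    | nil => exact absurd (mp_singleton hl₁) (ne_of_lt hac')
    | cons z t₁' =>
      have hz : z = b := by
        rw [show (a :: z :: t₁') ++ l₂.tail = a :: (z :: (t₁' ++ l₂.tail)) by simp] at ht
        rw [List.cons.injEq] at ht
        rw [← ht.2] at hh
        simpa using hh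
      have hzc : z ≤ c := pairwise_lt_getLast (mp_pairwise hl₁) hl₁.2.1 z (by simp)
      omega
  -- chains for cov are monotone paths
  have chainPath : ∀ a b (l : List ℤ), List.Chain cov a l → l.getLast? = some b →
      IsMonotonePath G a b (a :: l) := by
    intro a b l hch hlast
    refine ⟨rfl, ?_, ?_⟩
    · rw [getLast?_cons_of_ne_nil (by rintro rfl; simp at hlast)]
      exact hlast
    · exact List.IsChain.imp (fun x y hxy => hcov_adj x y hxy) hch
  refine ⟨?_, ?_, ?_, ?_⟩
  · intro a ha
    exact absurd ((hr a a).mp ha).1 (lt_irrefl a)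
  · intro a b c hab hbc
    obtain ⟨h1, l₁, hl₁⟩ := (hr a b).mp hab
    obtain ⟨h2, l₂, hl₂⟩ := (hr b c).mp hbc
    exact (hr a c).mpr ⟨h1.trans h2, _, mp_append hl₁ hl₂⟩
  · intro a b
    constructor
    · intro hadj
      rcases lt_or_gt_of_ne (G.ne_of_adj hadj) with h | h
      · exact Or.inl (key a b hadj h)
      · exact Or.inr (key b a hadj.symm h)
    · rintro (h | h)
      · exact (hcov_adj a b h).2
      · exact (hcov_adj b a h).2.symm
  · -- existence
    have exch : ∀ n, ∀ a b : ℤ, (b - a).toNat ≤ n → r a b →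
        ∃ l, List.Chain cov a l ∧ l.getLast? = some b := by
      intro n
      induction n with
      | zero =>
        intro a b hn hab
        have := ((hr a b).mp hab).1
        omega
      | succ n ih =>
        intro a b hn hab
        by_cases hc : ∃ c, r a c ∧ r c b
        · obtain ⟨c, hac, hcb⟩ := hc
          have h1 := ((hr a c).mp hac).1
          have h2 := ((hr c b).mp hcb).1
          obtain ⟨l₁, hch₁, hl₁⟩ := ih a c (by omega) hac
          obtain ⟨l₂, hch₂, hl₂⟩ := ih c b (by omega) hcb
          have hl₁ne : l₁ ≠ [] := by rintro rfl; simp at hl₁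
          have hl₂ne : l₂ ≠ [] := by rintro rfl; simp at hl₂
          refine ⟨l₁ ++ l₂, ?_, ?_⟩
          · have : List.Chain' cov ((a :: l₁) ++ l₂) := by
              unfold List.Chain'
              rw [List.isChain_append]
              refine ⟨hch₁, (show List.Chain' cov (c :: l₂) from hch₂).tail, ?_⟩
              intro p hp q hq
              rw [getLast?_cons_of_ne_nil hl₁ne, hl₁] at hp
              cases l₂ with
              | nil => exact absurd rfl hl₂ne
              | cons e t =>
                simp only [Option.mem_def, Option.some_inj, List.head?_cons] at hp hq
                subst hp; subst hq
                exact (List.chain_cons.mp hch₂).1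
            rw [List.cons_append] at this
            exact this
          · rw [List.getLast?_append_of_ne_nil _ hl₂ne]
            exact hl₂
        · have hcab : cov a b := (hcov a b).mpr ⟨hab, hc⟩
          exact ⟨[b], List.chain_cons.mpr ⟨hcab, List.Chain.nil⟩, rfl⟩
    intro a b hab
    obtain ⟨l, hch, hlast⟩ := exch (b - a).toNat a b le_rfl hab
    refine ⟨l, ⟨hch, hlast⟩, ?_⟩
    intro l' ⟨hch', hlast'⟩
    have h1 := chainPath a b l' hch' hlast'
    have h2 := chainPath a b l hch hlast
    have := mp_unique hbad ((a :: l').length + (a :: l).length) le_rfl h1 h2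
    exact (List.cons.injEq .. ▸ this).2
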